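/- Let X be a real or complex Banach space, T an invertible bounded linear operator on X, and M, N closed subspaces with X = M ⊕ N (topological direct sum), T(M) ⊆ M and T⁻¹(N) ⊆ N; assume there are constants a ≥ 1 and t ∈ (0,1) such that ‖Tⁿ(y)‖ ≤ a tⁿ ‖y‖ and ‖T⁻ⁿ(z)‖ ≤ a tⁿ ‖z‖ for all integers n ≥ 0, y ∈ M, z ∈ N, and let b = max(‖P_M‖, ‖P_N‖) for the projections P_M, P_N associated with the splitting. Then there exists ε > 0 (one may take ε = min{(1−t)/(a b (1+t)), ‖T⁻¹‖⁻¹}·δ for any fixed δ ∈ (0,1)) such that for every p ∈ ℕ and all bounded Lipschitz maps L₀,…,L_{p−1} : X → X with Lip(L_j) < ε for all j, there exist continuous bounded maps u₀,…,u_{p−1} : X → X such that each map h_j : x ↦ x + u_j(x) is a homeomorphism of X and (T + L_j) ∘ h_j = h_{j+1} ∘ T for all j (indices mod p); moreover max_j sup_{x∈X} ‖u_j(x)‖ ≤ (a·b·(1+t)/(1−t)) · max_j ‖L_j‖_∞. -/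

import Mathlib

noncomputable section

/-- The sup-norm of the map `F` is finite, i.e. `F` is a bounded map. -/
def BoundedMap {X Y : Type*} [Norm Y] (F : X → Y) : Prop :=
  ∃ C, ∀ x, ‖F x‖ ≤ C

/-- `Lip(F) < ε`: `F` is Lipschitz with some constant `< ε`. -/
def LipLt {X Y : Type*} [PseudoEMetricSpace X] [PseudoEMetricSpace Y]
    (F : X → Y) (ε : ℝ) : Prop :=
  ∃ c : NNReal, (c : ℝ) < ε ∧ LipschitzWith c F

open BoundedContinuousFunction Function Set
open Fin.NatCast Fin.CommRing

namespace HGaux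

/-- All the data and hypotheses needed for the construction. -/
structure Pack (𝕜 X : Type*) [RCLike 𝕜] [NormedAddCommGroup X] [NormedSpace 𝕜 X]
    [CompleteSpace X] where
  T : X ≃L[𝕜] X
  M : Submodule 𝕜 X
  N : Submodule 𝕜 X
  hMinv : ∀ x ∈ M, T x ∈ M
  a : ℝ
  t : ℝ
  ha : 1 ≤ a
  ht0 : 0 < t
  ht1 : t < 1
  hMb : ∀ (n : ℕ), ∀ y ∈ M, ‖(⇑T)^[n] y‖ ≤ a * t ^ n * ‖y‖
  hNb : ∀ (n : ℕ), ∀ z ∈ N, ‖(⇑T.symm)^[n] z‖ ≤ a * t ^ n * ‖z‖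
  hNinv : ∀ x ∈ N, T.symm x ∈ N
  PM : X →L[𝕜] X
  PN : X →L[𝕜] X
  hPM : ∀ x, PM x ∈ M
  hPN : ∀ x, PN x ∈ N
  hP : ∀ x, PM x + PN x = x
  p : ℕ
  L : Fin (p + 1) → X → X
  c : NNReal
  hLip : ∀ j, LipschitzWith c (L j)
  CL : ℝ
  hCL : ∀ j y, ‖L j y‖ ≤ CL
  hFh : Subsingleton X ∨ c < (‖(T.symm : X →L[𝕜] X)‖₊)⁻¹
  hsmall : a * max ‖PM‖ ‖PN‖ * (1 + t) / (1 - t) * (c : ℝ) < 1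

lemma tsum_apply_aux (𝕜 : Type*) {α X : Type*} [TopologicalSpace α] [NormedField 𝕜]
    [NormedAddCommGroup X] [NormedSpace 𝕜 X] {f : ℕ → α →ᵇ X} (hf : Summable f) (x : α) :
    (∑' k, f k) x = ∑' k, f k x :=
  (BoundedContinuousFunction.evalCLM 𝕜 x).map_tsum hf

lemma summable_apply_aux (𝕜 : Type*) {α X : Type*} [TopologicalSpace α] [NormedField 𝕜]
    [NormedAddCommGroup X] [NormedSpace 𝕜 X] {f : ℕ → α →ᵇ X} (hf : Summable f) (x : α) :
    Summable (fun k => f k x) :=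
  hf.mapL (BoundedContinuousFunction.evalCLM 𝕜 x)

namespace Pack

variable {𝕜 X : Type*} [RCLike 𝕜] [NormedAddCommGroup X] [NormedSpace 𝕜 X] [CompleteSpace X]
variable (S : Pack 𝕜 X)

/-- `b = max(‖P_M‖, ‖P_N‖)`. -/
def b : ℝ := max ‖S.PM‖ ‖S.PN‖

/-- The constant `K = a b (1+t)/(1-t)`. -/
def K : ℝ := S.a * S.b * (1 + S.t) / (1 - S.t)

lemma hb0 : 0 ≤ S.b := le_trans (norm_nonneg _) (le_max_left _ _)

lemma ha0 : 0 < S.a := lt_of_lt_of_le one_pos S.ha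

lemma h1t : 0 < 1 - S.t := by linarith [S.ht1]

lemma h1t' : 0 < 1 + S.t := by linarith [S.ht0]

lemma hK0 : 0 ≤ S.K :=
  div_nonneg (mul_nonneg (mul_nonneg S.ha0.le S.hb0) S.h1t'.le) S.h1t.le

lemma hCL0 : 0 ≤ S.CL := le_trans (norm_nonneg (S.L 0 0)) (S.hCL 0 0)

lemma normPM (x : X) : ‖S.PM x‖ ≤ S.b * ‖x‖ :=
  le_trans (S.PM.le_opNorm x)
    (mul_le_mul_of_nonneg_right (le_max_left _ _) (norm_nonneg x))

lemma normPN (x : X) : ‖S.PN x‖ ≤ S.b * ‖x‖ :=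
  le_trans (S.PN.le_opNorm x)
    (mul_le_mul_of_nonneg_right (le_max_right _ _) (norm_nonneg x))

lemma iterT_mem (n : ℕ) {y : X} (hy : y ∈ S.M) : (⇑S.T)^[n] y ∈ S.M := by
  induction n with
  | zero => simpa using hy
  | succ n ih => rw [Function.iterate_succ_apply']; exact S.hMinv _ ih

lemma iterTs_mem (n : ℕ) {y : X} (hy : y ∈ S.N) : (⇑S.T.symm)^[n] y ∈ S.N := by
  induction n with
  | zero => simpa using hy
  | succ n ih => rw [Function.iterate_succ_apply']; exact S.hNinv _ ih

lemma iterT_sub (n : ℕ) (x y : X) :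
    (⇑S.T)^[n] x - (⇑S.T)^[n] y = (⇑S.T)^[n] (x - y) := by
  induction n with
  | zero => simp
  | succ n ih =>
      rw [Function.iterate_succ_apply', Function.iterate_succ_apply',
        Function.iterate_succ_apply', ← map_sub, ih]

lemma iterTs_sub (n : ℕ) (x y : X) :
    (⇑S.T.symm)^[n] x - (⇑S.T.symm)^[n] y = (⇑S.T.symm)^[n] (x - y) := by
  induction n with
  | zero => simp
  | succ n ih =>
      rw [Function.iterate_succ_apply', Function.iterate_succ_apply',
        Function.iterate_succ_apply', ← map_sub, ih]

lemma iter_cancel (n : ℕ) (x : X) : (⇑S.T)^[n] ((⇑S.T.symm)^[n] x) = x :=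
  Function.LeftInverse.iterate (fun y => S.T.apply_symm_apply y) n x

lemma iter_cancel' (n : ℕ) (x : X) : (⇑S.T.symm)^[n] ((⇑S.T)^[n] x) = x :=
  Function.LeftInverse.iterate (fun y => S.T.symm_apply_apply y) n x

/-- Building block for the `M`-part series. -/
def mkM (k : ℕ) (φ : X → X) (hc : Continuous φ) (hb : ∀ x, ‖φ x‖ ≤ S.CL) : X →ᵇ X :=
  ofNormedAddCommGroup (fun x => (⇑S.T)^[k] (S.PM (φ x)))
    ((S.T.continuous.iterate k).comp (S.PM.continuous.comp hc))
    (S.a * S.b * S.CL * S.t ^ k)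
    (fun x => by
      have h1 := S.hMb k (S.PM (φ x)) (S.hPM _)
      have h2 : ‖S.PM (φ x)‖ ≤ S.b * S.CL :=
        le_trans (S.normPM _) (mul_le_mul_of_nonneg_left (hb x) S.hb0)
      have h3 : 0 ≤ S.a * S.t ^ k := mul_nonneg S.ha0.le (pow_nonneg S.ht0.le k)
      calc ‖(⇑S.T)^[k] (S.PM (φ x))‖ ≤ S.a * S.t ^ k * ‖S.PM (φ x)‖ := h1
        _ ≤ S.a * S.t ^ k * (S.b * S.CL) := mul_le_mul_of_nonneg_left h2 h3
        _ = S.a * S.b * S.CL * S.t ^ k := by ring)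

/-- Building block for the `N`-part series. -/
def mkN (k : ℕ) (φ : X → X) (hc : Continuous φ) (hb : ∀ x, ‖φ x‖ ≤ S.CL) : X →ᵇ X :=
  ofNormedAddCommGroup (fun x => (⇑S.T.symm)^[k + 1] (S.PN (φ x)))
    ((S.T.symm.continuous.iterate (k + 1)).comp (S.PN.continuous.comp hc))
    (S.a * S.b * S.CL * S.t * S.t ^ k)
    (fun x => by
      have h1 := S.hNb (k + 1) (S.PN (φ x)) (S.hPN _)
      have h2 : ‖S.PN (φ x)‖ ≤ S.b * S.CL :=
        le_trans (S.normPN _) (mul_le_mul_of_nonneg_left (hb x) S.hb0)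
      have h3 : 0 ≤ S.a * S.t ^ (k + 1) := mul_nonneg S.ha0.le (pow_nonneg S.ht0.le _)
      calc ‖(⇑S.T.symm)^[k + 1] (S.PN (φ x))‖ ≤ S.a * S.t ^ (k + 1) * ‖S.PN (φ x)‖ := h1
        _ ≤ S.a * S.t ^ (k + 1) * (S.b * S.CL) := mul_le_mul_of_nonneg_left h2 h3
        _ = S.a * S.b * S.CL * S.t * S.t ^ k := by ring)

lemma mkM_apply (k : ℕ) (φ : X → X) (hc : Continuous φ) (hb : ∀ x, ‖φ x‖ ≤ S.CL) (x : X) :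
    S.mkM k φ hc hb x = (⇑S.T)^[k] (S.PM (φ x)) := rfl

lemma mkN_apply (k : ℕ) (φ : X → X) (hc : Continuous φ) (hb : ∀ x, ‖φ x‖ ≤ S.CL) (x : X) :
    S.mkN k φ hc hb x = (⇑S.T.symm)^[k + 1] (S.PN (φ x)) := rfl

lemma norm_mkM_le (k : ℕ) (φ : X → X) (hc : Continuous φ) (hb : ∀ x, ‖φ x‖ ≤ S.CL) :
    ‖S.mkM k φ hc hb‖ ≤ S.a * S.b * S.CL * S.t ^ k :=
  norm_ofNormedAddCommGroup_le _
    (by have := S.ha0.le; have := S.hb0; have := S.hCL0; have := pow_nonneg S.ht0.le k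
        positivity) _

lemma norm_mkN_le (k : ℕ) (φ : X → X) (hc : Continuous φ) (hb : ∀ x, ‖φ x‖ ≤ S.CL) :
    ‖S.mkN k φ hc hb‖ ≤ S.a * S.b * S.CL * S.t * S.t ^ k :=
  norm_ofNormedAddCommGroup_le _
    (by have := S.ha0.le; have := S.hb0; have := S.hCL0; have := S.ht0.le
        have := pow_nonneg S.ht0.le k; positivity) _

lemma norm_mkM_sub_le (k : ℕ) (φ₁ φ₂ : X → X) (hc₁ : Continuous φ₁) (hb₁ : ∀ x, ‖φ₁ x‖ ≤ S.CL)
    (hc₂ : Continuous φ₂) (hb₂ : ∀ x, ‖φ₂ x‖ ≤ S.CL) {D : ℝ} (hD0 : 0 ≤ D)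
    (hD : ∀ x, ‖φ₁ x - φ₂ x‖ ≤ D) :
    ‖S.mkM k φ₁ hc₁ hb₁ - S.mkM k φ₂ hc₂ hb₂‖ ≤ S.a * S.b * D * S.t ^ k := by
  have h0 : 0 ≤ S.a * S.b * D * S.t ^ k := by
    have := S.ha0.le; have := S.hb0; have := pow_nonneg S.ht0.le k; positivity
  rw [norm_le h0]
  intro x
  have hx : (S.mkM k φ₁ hc₁ hb₁ - S.mkM k φ₂ hc₂ hb₂) x
      = (⇑S.T)^[k] (S.PM (φ₁ x - φ₂ x)) := by
    simp only [coe_sub, Pi.sub_apply, mkM_apply]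
    rw [S.iterT_sub, map_sub]
  rw [hx]
  have h1 := S.hMb k (S.PM (φ₁ x - φ₂ x)) (S.hPM _)
  have h2 : ‖S.PM (φ₁ x - φ₂ x)‖ ≤ S.b * D :=
    le_trans (S.normPM _) (mul_le_mul_of_nonneg_left (hD x) S.hb0)
  have h3 : 0 ≤ S.a * S.t ^ k := mul_nonneg S.ha0.le (pow_nonneg S.ht0.le k)
  calc ‖(⇑S.T)^[k] (S.PM (φ₁ x - φ₂ x))‖ ≤ S.a * S.t ^ k * ‖S.PM (φ₁ x - φ₂ x)‖ := h1
    _ ≤ S.a * S.t ^ k * (S.b * D) := mul_le_mul_of_nonneg_left h2 h3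
    _ = S.a * S.b * D * S.t ^ k := by ring

lemma norm_mkN_sub_le (k : ℕ) (φ₁ φ₂ : X → X) (hc₁ : Continuous φ₁) (hb₁ : ∀ x, ‖φ₁ x‖ ≤ S.CL)
    (hc₂ : Continuous φ₂) (hb₂ : ∀ x, ‖φ₂ x‖ ≤ S.CL) {D : ℝ} (hD0 : 0 ≤ D)
    (hD : ∀ x, ‖φ₁ x - φ₂ x‖ ≤ D) :
    ‖S.mkN k φ₁ hc₁ hb₁ - S.mkN k φ₂ hc₂ hb₂‖ ≤ S.a * S.b * D * S.t * S.t ^ k := by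
  have h0 : 0 ≤ S.a * S.b * D * S.t * S.t ^ k := by
    have := S.ha0.le; have := S.hb0; have := S.ht0.le; have := pow_nonneg S.ht0.le k; positivity
  rw [norm_le h0]
  intro x
  have hx : (S.mkN k φ₁ hc₁ hb₁ - S.mkN k φ₂ hc₂ hb₂) x
      = (⇑S.T.symm)^[k + 1] (S.PN (φ₁ x - φ₂ x)) := by
    simp only [coe_sub, Pi.sub_apply, mkN_apply]
    rw [S.iterTs_sub, map_sub]
  rw [hx]
  have h1 := S.hNb (k + 1) (S.PN (φ₁ x - φ₂ x)) (S.hPN _)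
  have h2 : ‖S.PN (φ₁ x - φ₂ x)‖ ≤ S.b * D :=
    le_trans (S.normPN _) (mul_le_mul_of_nonneg_left (hD x) S.hb0)
  have h3 : 0 ≤ S.a * S.t ^ (k + 1) := mul_nonneg S.ha0.le (pow_nonneg S.ht0.le _)
  calc ‖(⇑S.T.symm)^[k + 1] (S.PN (φ₁ x - φ₂ x))‖
      ≤ S.a * S.t ^ (k + 1) * ‖S.PN (φ₁ x - φ₂ x)‖ := h1
    _ ≤ S.a * S.t ^ (k + 1) * (S.b * D) := mul_le_mul_of_nonneg_left h2 h3
    _ = S.a * S.b * D * S.t * S.t ^ k := by ring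

lemma summable_of_norm_le {f : ℕ → X →ᵇ X} {C : ℝ} (h : ∀ k, ‖f k‖ ≤ C * S.t ^ k) :
    Summable f :=
  Summable.of_norm_bounded ((summable_geometric_of_lt_one S.ht0.le S.ht1).mul_left C) h

lemma summable_of_norm_le_gen {E : Type*} [NormedAddCommGroup E] [CompleteSpace E]
    {f : ℕ → E} {C : ℝ} (h : ∀ k, ‖f k‖ ≤ C * S.t ^ k) : Summable f :=
  Summable.of_norm_bounded ((summable_geometric_of_lt_one S.ht0.le S.ht1).mul_left C) h

lemma norm_tsum_le_gen {E : Type*} [NormedAddCommGroup E] [CompleteSpace E]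
    {f : ℕ → E} {C : ℝ} (h : ∀ k, ‖f k‖ ≤ C * S.t ^ k) :
    ‖∑' k, f k‖ ≤ C * (1 - S.t)⁻¹ := by
  have hgeom : Summable (fun k => C * S.t ^ k) :=
    (summable_geometric_of_lt_one S.ht0.le S.ht1).mul_left C
  have hn : Summable (fun k => ‖f k‖) :=
    Summable.of_nonneg_of_le (fun k => norm_nonneg _) h hgeom
  calc ‖∑' k, f k‖ ≤ ∑' k, ‖f k‖ := norm_tsum_le_tsum_norm hn
    _ ≤ ∑' k, C * S.t ^ k := Summable.tsum_le_tsum h hn hgeom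
    _ = C * (1 - S.t)⁻¹ := by
        rw [tsum_mul_left, tsum_geometric_of_lt_one S.ht0.le S.ht1]

lemma norm_tsum_le' {f : ℕ → X →ᵇ X} {C : ℝ} (h : ∀ k, ‖f k‖ ≤ C * S.t ^ k) :
    ‖∑' k, f k‖ ≤ C * (1 - S.t)⁻¹ := by
  have hgeom : Summable (fun k => C * S.t ^ k) :=
    (summable_geometric_of_lt_one S.ht0.le S.ht1).mul_left C
  have hn : Summable (fun k => ‖f k‖) :=
    Summable.of_nonneg_of_le (fun k => norm_nonneg _) h hgeom
  calc ‖∑' k, f k‖ ≤ ∑' k, ‖f k‖ := norm_tsum_le_tsum_norm hn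
    _ ≤ ∑' k, C * S.t ^ k := Summable.tsum_le_tsum h hn hgeom
    _ = C * (1 - S.t)⁻¹ := by
        rw [tsum_mul_left, tsum_geometric_of_lt_one S.ht0.le S.ht1]


/-! ### The map `Φ` whose fixed point gives the conjugating functions -/

/-- Inner function of the `M`-part terms. -/
def phiM (u : Fin (S.p + 1) → X →ᵇ X) (j : Fin (S.p + 1)) (k : ℕ) : X → X := fun x =>
  S.L (j - (↑(k + 1) : Fin (S.p + 1)))
    ((⇑S.T.symm)^[k + 1] x + u (j - (↑(k + 1) : Fin (S.p + 1))) ((⇑S.T.symm)^[k + 1] x))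

/-- Inner function of the `N`-part terms. -/
def phiN (u : Fin (S.p + 1) → X →ᵇ X) (j : Fin (S.p + 1)) (k : ℕ) : X → X := fun x =>
  S.L (j + (↑k : Fin (S.p + 1)))
    ((⇑S.T)^[k] x + u (j + (↑k : Fin (S.p + 1))) ((⇑S.T)^[k] x))

lemma phiM_cont (u : Fin (S.p + 1) → X →ᵇ X) (j : Fin (S.p + 1)) (k : ℕ) :
    Continuous (S.phiM u j k) := by
  apply (S.hLip _).continuous.comp
  exact (S.T.symm.continuous.iterate (k + 1)).add
    ((u _).continuous.comp (S.T.symm.continuous.iterate (k + 1)))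

lemma phiN_cont (u : Fin (S.p + 1) → X →ᵇ X) (j : Fin (S.p + 1)) (k : ℕ) :
    Continuous (S.phiN u j k) := by
  apply (S.hLip _).continuous.comp
  exact (S.T.continuous.iterate k).add
    ((u _).continuous.comp (S.T.continuous.iterate k))

lemma phiM_bdd (u : Fin (S.p + 1) → X →ᵇ X) (j : Fin (S.p + 1)) (k : ℕ) :
    ∀ x, ‖S.phiM u j k x‖ ≤ S.CL := fun _ => S.hCL _ _

lemma phiN_bdd (u : Fin (S.p + 1) → X →ᵇ X) (j : Fin (S.p + 1)) (k : ℕ) :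
    ∀ x, ‖S.phiN u j k x‖ ≤ S.CL := fun _ => S.hCL _ _

/-- `M`-part terms of the series defining `Φ u`. -/
def termM (u : Fin (S.p + 1) → X →ᵇ X) (j : Fin (S.p + 1)) (k : ℕ) : X →ᵇ X :=
  S.mkM k (S.phiM u j k) (S.phiM_cont u j k) (S.phiM_bdd u j k)

/-- `N`-part terms of the series defining `Φ u`. -/
def termN (u : Fin (S.p + 1) → X →ᵇ X) (j : Fin (S.p + 1)) (k : ℕ) : X →ᵇ X :=
  S.mkN k (S.phiN u j k) (S.phiN_cont u j k) (S.phiN_bdd u j k)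

lemma termM_apply (u : Fin (S.p + 1) → X →ᵇ X) (j : Fin (S.p + 1)) (k : ℕ) (x : X) :
    S.termM u j k x = (⇑S.T)^[k] (S.PM (S.L (j - (↑(k + 1) : Fin (S.p + 1)))
      ((⇑S.T.symm)^[k + 1] x + u (j - (↑(k + 1) : Fin (S.p + 1))) ((⇑S.T.symm)^[k + 1] x)))) :=
  rfl

lemma termN_apply (u : Fin (S.p + 1) → X →ᵇ X) (j : Fin (S.p + 1)) (k : ℕ) (x : X) :
    S.termN u j k x = (⇑S.T.symm)^[k + 1] (S.PN (S.L (j + (↑k : Fin (S.p + 1)))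
      ((⇑S.T)^[k] x + u (j + (↑k : Fin (S.p + 1))) ((⇑S.T)^[k] x)))) :=
  rfl

lemma norm_termM_le (u : Fin (S.p + 1) → X →ᵇ X) (j : Fin (S.p + 1)) (k : ℕ) :
    ‖S.termM u j k‖ ≤ (S.a * S.b * S.CL) * S.t ^ k := by
  have h := S.norm_mkM_le k (S.phiM u j k) (S.phiM_cont u j k) (S.phiM_bdd u j k)
  calc ‖S.termM u j k‖ ≤ S.a * S.b * S.CL * S.t ^ k := h
    _ = (S.a * S.b * S.CL) * S.t ^ k := by ring

lemma norm_termN_le (u : Fin (S.p + 1) → X →ᵇ X) (j : Fin (S.p + 1)) (k : ℕ) :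
    ‖S.termN u j k‖ ≤ (S.a * S.b * S.CL * S.t) * S.t ^ k := by
  have h := S.norm_mkN_le k (S.phiN u j k) (S.phiN_cont u j k) (S.phiN_bdd u j k)
  calc ‖S.termN u j k‖ ≤ S.a * S.b * S.CL * S.t * S.t ^ k := h
    _ = (S.a * S.b * S.CL * S.t) * S.t ^ k := by ring

lemma summable_termM (u : Fin (S.p + 1) → X →ᵇ X) (j : Fin (S.p + 1)) :
    Summable (S.termM u j) :=
  S.summable_of_norm_le (fun k => S.norm_termM_le u j k)

lemma summable_termN (u : Fin (S.p + 1) → X →ᵇ X) (j : Fin (S.p + 1)) :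
    Summable (S.termN u j) :=
  S.summable_of_norm_le (fun k => S.norm_termN_le u j k)

/-- The contraction map. -/
def Phi (u : Fin (S.p + 1) → X →ᵇ X) : Fin (S.p + 1) → X →ᵇ X := fun j =>
  (∑' k, S.termM u j k) - (∑' k, S.termN u j k)

lemma Phi_apply (u : Fin (S.p + 1) → X →ᵇ X) (j : Fin (S.p + 1)) (x : X) :
    S.Phi u j x = (∑' k, S.termM u j k x) - (∑' k, S.termN u j k x) := by
  have h : S.Phi u j x = (∑' k, S.termM u j k) x - (∑' k, S.termN u j k) x := rfl
  rw [h, tsum_apply_aux 𝕜 (S.summable_termM u j), tsum_apply_aux 𝕜 (S.summable_termN u j)]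

lemma dist_apply_le (u v : Fin (S.p + 1) → X →ᵇ X) (i : Fin (S.p + 1)) (y : X) :
    dist (u i y) (v i y) ≤ dist u v :=
  le_trans (dist_coe_le_dist y) (dist_le_pi_dist u v i)

lemma Phi_lipschitz (u v : Fin (S.p + 1) → X →ᵇ X) :
    dist (S.Phi u) (S.Phi v) ≤ S.K * S.c * dist u v := by
  have hd0 : (0 : ℝ) ≤ dist u v := dist_nonneg
  have hc0 : (0 : ℝ) ≤ S.c := S.c.2
  have hKcd : (0 : ℝ) ≤ S.K * S.c * dist u v :=
    mul_nonneg (mul_nonneg S.hK0 hc0) hd0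
  rw [dist_pi_le_iff hKcd]
  intro j
  rw [dist_eq_norm]
  have hφ : ∀ (i : Fin (S.p + 1)) (y : X),
      ‖S.L i (y + u i y) - S.L i (y + v i y)‖ ≤ (S.c : ℝ) * dist u v := by
    intro i y
    have h2 : dist (y + u i y) (y + v i y) ≤ dist u v := by
      rw [dist_add_left]
      exact S.dist_apply_le u v i y
    calc ‖S.L i (y + u i y) - S.L i (y + v i y)‖
        = dist (S.L i (y + u i y)) (S.L i (y + v i y)) := (dist_eq_norm _ _).symm
      _ ≤ (S.c : ℝ) * dist (y + u i y) (y + v i y) := (S.hLip i).dist_le_mul _ _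
      _ ≤ (S.c : ℝ) * dist u v := mul_le_mul_of_nonneg_left h2 hc0
  have hM : ∀ k, ‖S.termM u j k - S.termM v j k‖
      ≤ (S.a * S.b * ((S.c : ℝ) * dist u v)) * S.t ^ k := by
    intro k
    have h := S.norm_mkM_sub_le k (S.phiM u j k) (S.phiM v j k)
      (S.phiM_cont u j k) (S.phiM_bdd u j k) (S.phiM_cont v j k) (S.phiM_bdd v j k)
      (mul_nonneg hc0 hd0) (fun x => hφ _ ((⇑S.T.symm)^[k + 1] x))
    calc ‖S.termM u j k - S.termM v j k‖
        ≤ S.a * S.b * ((S.c : ℝ) * dist u v) * S.t ^ k := h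
      _ = (S.a * S.b * ((S.c : ℝ) * dist u v)) * S.t ^ k := by ring
  have hN : ∀ k, ‖S.termN u j k - S.termN v j k‖
      ≤ (S.a * S.b * ((S.c : ℝ) * dist u v) * S.t) * S.t ^ k := by
    intro k
    have h := S.norm_mkN_sub_le k (S.phiN u j k) (S.phiN v j k)
      (S.phiN_cont u j k) (S.phiN_bdd u j k) (S.phiN_cont v j k) (S.phiN_bdd v j k)
      (mul_nonneg hc0 hd0) (fun x => hφ _ ((⇑S.T)^[k] x))
    calc ‖S.termN u j k - S.termN v j k‖
        ≤ S.a * S.b * ((S.c : ℝ) * dist u v) * S.t * S.t ^ k := h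
      _ = (S.a * S.b * ((S.c : ℝ) * dist u v) * S.t) * S.t ^ k := by ring
  have hsub : S.Phi u j - S.Phi v j
      = (∑' k, (S.termM u j k - S.termM v j k)) - (∑' k, (S.termN u j k - S.termN v j k)) := by
    rw [Summable.tsum_sub (S.summable_termM u j) (S.summable_termM v j),
      Summable.tsum_sub (S.summable_termN u j) (S.summable_termN v j)]
    show ((∑' k, S.termM u j k) - (∑' k, S.termN u j k))
        - ((∑' k, S.termM v j k) - (∑' k, S.termN v j k)) = _
    abel
  rw [hsub]
  have h1 : ‖∑' k, (S.termM u j k - S.termM v j k)‖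
      ≤ (S.a * S.b * ((S.c : ℝ) * dist u v)) * (1 - S.t)⁻¹ := S.norm_tsum_le' hM
  have h2 : ‖∑' k, (S.termN u j k - S.termN v j k)‖
      ≤ (S.a * S.b * ((S.c : ℝ) * dist u v) * S.t) * (1 - S.t)⁻¹ := S.norm_tsum_le' hN
  have hKeq : S.K = S.a * S.b * (1 + S.t) * (1 - S.t)⁻¹ := by
    rw [K, div_eq_mul_inv]
  calc ‖(∑' k, (S.termM u j k - S.termM v j k)) - (∑' k, (S.termN u j k - S.termN v j k))‖
      ≤ ‖∑' k, (S.termM u j k - S.termM v j k)‖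
        + ‖∑' k, (S.termN u j k - S.termN v j k)‖ := norm_sub_le _ _
    _ ≤ (S.a * S.b * ((S.c : ℝ) * dist u v)) * (1 - S.t)⁻¹
        + (S.a * S.b * ((S.c : ℝ) * dist u v) * S.t) * (1 - S.t)⁻¹ := add_le_add h1 h2
    _ = S.K * S.c * dist u v := by rw [hKeq]; ring

/-- The contraction constant. -/
def kappa : NNReal := Real.toNNReal (S.K * S.c)

lemma kappa_coe : (S.kappa : ℝ) = S.K * S.c :=
  Real.coe_toNNReal _ (mul_nonneg S.hK0 S.c.2)

lemma Phi_contracting : ContractingWith S.kappa S.Phi := by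
  constructor
  · have h1 : S.K * (S.c : ℝ) < 1 := S.hsmall
    rw [← NNReal.coe_lt_coe, kappa_coe, NNReal.coe_one]
    exact h1
  · apply LipschitzWith.of_dist_le_mul
    intro u v
    rw [kappa_coe]
    exact S.Phi_lipschitz u v

/-- The fixed point: the family of correctors `u_j`. -/
def uu : Fin (S.p + 1) → X →ᵇ X :=
  ContractingWith.fixedPoint S.Phi S.Phi_contracting

lemma uu_fixed : S.Phi S.uu = S.uu :=
  S.Phi_contracting.fixedPoint_isFixedPt

lemma uu_eq (j : Fin (S.p + 1)) :
    S.uu j = (∑' k, S.termM S.uu j k) - (∑' k, S.termN S.uu j k) := by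
  conv_lhs => rw [← S.uu_fixed]
  rfl

lemma uu_apply (j : Fin (S.p + 1)) (x : X) :
    S.uu j x = (∑' k, S.termM S.uu j k x) - (∑' k, S.termN S.uu j k x) := by
  conv_lhs => rw [← S.uu_fixed]
  exact S.Phi_apply S.uu j x

lemma uu_norm (j : Fin (S.p + 1)) : ‖S.uu j‖ ≤ S.K * S.CL := by
  have h1 : ‖∑' k, S.termM S.uu j k‖ ≤ (S.a * S.b * S.CL) * (1 - S.t)⁻¹ :=
    S.norm_tsum_le' (S.norm_termM_le S.uu j)
  have h2 : ‖∑' k, S.termN S.uu j k‖ ≤ (S.a * S.b * S.CL * S.t) * (1 - S.t)⁻¹ :=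
    S.norm_tsum_le' (S.norm_termN_le S.uu j)
  have hKeq : S.K = S.a * S.b * (1 + S.t) * (1 - S.t)⁻¹ := by rw [K, div_eq_mul_inv]
  rw [S.uu_eq]
  calc ‖(∑' k, S.termM S.uu j k) - (∑' k, S.termN S.uu j k)‖
      ≤ ‖∑' k, S.termM S.uu j k‖ + ‖∑' k, S.termN S.uu j k‖ := norm_sub_le _ _
    _ ≤ (S.a * S.b * S.CL) * (1 - S.t)⁻¹ + (S.a * S.b * S.CL * S.t) * (1 - S.t)⁻¹ :=
        add_le_add h1 h2
    _ = S.K * S.CL := by rw [hKeq]; ring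


/-! ### The semiconjugacy identity for `uu` -/

lemma map_tsum_T {f : ℕ → X} (hf : Summable f) :
    S.T (∑' k, f k) = ∑' k, S.T (f k) :=
  (S.T : X →L[𝕜] X).map_tsum hf

lemma summable_T {f : ℕ → X} (hf : Summable f) :
    Summable (fun k => S.T (f k)) :=
  hf.mapL (S.T : X →L[𝕜] X)

theorem uu_conj (j : Fin (S.p + 1)) (x : X) :
    S.uu (j + 1) (S.T x) = S.T (S.uu j x) + S.L j (x + S.uu j x) := by
  have hMk : ∀ k : ℕ, S.termM S.uu (j + 1) k (S.T x)
      = (⇑S.T)^[k] (S.PM (S.L (j - (↑k : Fin (S.p + 1)))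
          ((⇑S.T.symm)^[k] x + S.uu (j - (↑k : Fin (S.p + 1))) ((⇑S.T.symm)^[k] x)))) := by
    intro k
    have e1 : (j + 1) - (↑(k + 1) : Fin (S.p + 1)) = j - (↑k : Fin (S.p + 1)) := by
      push_cast; ring
    have e2 : (⇑S.T.symm)^[k + 1] (S.T x) = (⇑S.T.symm)^[k] x := by
      rw [Function.iterate_succ_apply]
      congr 1
      exact S.T.symm_apply_apply x
    rw [S.termM_apply, e1, e2]
  have hsumM1 : Summable (fun k => S.termM S.uu (j + 1) k (S.T x)) :=
    summable_apply_aux 𝕜 (S.summable_termM S.uu (j + 1)) (S.T x)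
  have hsumMx : Summable (fun k => S.termM S.uu j k x) :=
    summable_apply_aux 𝕜 (S.summable_termM S.uu j) x
  have hsumNx : Summable (fun k => S.termN S.uu j k x) :=
    summable_apply_aux 𝕜 (S.summable_termN S.uu j) x
  have hM : (∑' k, S.termM S.uu (j + 1) k (S.T x))
      = S.PM (S.L j (x + S.uu j x)) + S.T (∑' k, S.termM S.uu j k x) := by
    rw [Summable.tsum_eq_zero_add hsumM1]
    congr 1
    · rw [hMk 0]
      simp
    · have hsucc : ∀ k : ℕ, S.termM S.uu (j + 1) (k + 1) (S.T x)
          = S.T (S.termM S.uu j k x) := by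
        intro k
        rw [hMk (k + 1), Function.iterate_succ_apply', ← S.termM_apply]
      rw [tsum_congr hsucc]
      exact (S.map_tsum_T hsumMx).symm
  have hTN : S.T (∑' k, S.termN S.uu j k x)
      = S.PN (S.L j (x + S.uu j x)) + (∑' k, S.termN S.uu (j + 1) k (S.T x)) := by
    have hD : ∀ k : ℕ, S.T (S.termN S.uu j k x)
        = (⇑S.T.symm)^[k] (S.PN (S.L (j + (↑k : Fin (S.p + 1)))
            ((⇑S.T)^[k] x + S.uu (j + (↑k : Fin (S.p + 1))) ((⇑S.T)^[k] x)))) := by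
      intro k
      rw [S.termN_apply, Function.iterate_succ_apply']
      exact S.T.apply_symm_apply _
    have hsumD : Summable (fun k => S.T (S.termN S.uu j k x)) := S.summable_T hsumNx
    rw [S.map_tsum_T hsumNx, Summable.tsum_eq_zero_add hsumD]
    congr 1
    · rw [hD 0]
      simp
    · apply tsum_congr
      intro k
      rw [hD (k + 1), S.termN_apply]
      have e1 : (j + 1) + (↑k : Fin (S.p + 1)) = j + (↑(k + 1) : Fin (S.p + 1)) := by
        push_cast; ring
      have e2 : (⇑S.T)^[k] (S.T x) = (⇑S.T)^[k + 1] x :=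
        (Function.iterate_succ_apply _ _ _).symm
      rw [e1, e2]
  have hN' : (∑' k, S.termN S.uu (j + 1) k (S.T x))
      = S.T (∑' k, S.termN S.uu j k x) - S.PN (S.L j (x + S.uu j x)) := by
    rw [hTN]; abel
  calc S.uu (j + 1) (S.T x)
      = (∑' k, S.termM S.uu (j + 1) k (S.T x)) - (∑' k, S.termN S.uu (j + 1) k (S.T x)) :=
        S.uu_apply _ _
    _ = (S.PM (S.L j (x + S.uu j x)) + S.T (∑' k, S.termM S.uu j k x))
        - (S.T (∑' k, S.termN S.uu j k x) - S.PN (S.L j (x + S.uu j x))) := by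
        rw [hM, hN']
    _ = S.T (∑' k, S.termM S.uu j k x) - S.T (∑' k, S.termN S.uu j k x)
        + (S.PM (S.L j (x + S.uu j x)) + S.PN (S.L j (x + S.uu j x))) := by abel
    _ = S.T (∑' k, S.termM S.uu j k x) - S.T (∑' k, S.termN S.uu j k x)
        + S.L j (x + S.uu j x) := by rw [S.hP]
    _ = S.T ((∑' k, S.termM S.uu j k x) - (∑' k, S.termN S.uu j k x))
        + S.L j (x + S.uu j x) := by rw [map_sub]
    _ = S.T (S.uu j x) + S.L j (x + S.uu j x) := by rw [← S.uu_apply]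


/-! ### The perturbed maps `F_j = T + L_j` as homeomorphisms, and their composites -/

lemma FhALO (j : Fin (S.p + 1)) :
    ApproximatesLinearOn (fun x => S.T x + S.L j x) (S.T : X →L[𝕜] X) Set.univ S.c := by
  intro x _ y _
  have h2 : (S.T : X →L[𝕜] X) (x - y) = S.T x - S.T y := by simp
  have h3 : (S.T x + S.L j x) - (S.T y + S.L j y) - ((S.T : X →L[𝕜] X) (x - y))
      = S.L j x - S.L j y := by rw [h2]; abel
  rw [h3, ← dist_eq_norm, ← dist_eq_norm]
  exact (S.hLip j).dist_le_mul x y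

/-- `F_j = T + L_j` as a homeomorphism of `X`. -/
def Fh (j : Fin (S.p + 1)) : X ≃ₜ X :=
  (S.FhALO j).toHomeomorph (fun x => S.T x + S.L j x) S.hFh

lemma Fh_apply (j : Fin (S.p + 1)) (x : X) : S.Fh j x = S.T x + S.L j x := rfl

/-- Forward composites `F_{j+k-1} ∘ ⋯ ∘ F_j`. -/
def Cc (j : Fin (S.p + 1)) (k : ℕ) : X ≃ₜ X :=
  Nat.rec (Homeomorph.refl X) (fun k ih => ih.trans (S.Fh (j + (↑k : Fin (S.p + 1))))) k

lemma Cc_zero (j : Fin (S.p + 1)) (x : X) : S.Cc j 0 x = x := rfl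

lemma Cc_succ (j : Fin (S.p + 1)) (k : ℕ) (x : X) :
    S.Cc j (k + 1) x = S.Fh (j + (↑k : Fin (S.p + 1))) (S.Cc j k x) := rfl

lemma Cc_shift (j : Fin (S.p + 1)) (k : ℕ) (x : X) :
    S.Cc (j + 1) k (S.Fh j x) = S.Cc j (k + 1) x := by
  induction k with
  | zero =>
      have e : j + ((0 : ℕ) : Fin (S.p + 1)) = j := by push_cast; ring
      rw [Cc_succ, e, Cc_zero, Cc_zero]
  | succ k ih =>
      have e : (j + 1) + ((k : ℕ) : Fin (S.p + 1)) = j + ((k + 1 : ℕ) : Fin (S.p + 1)) := by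
        push_cast; ring
      rw [Cc_succ, ih, e, ← Cc_succ]

/-! ### The series defining the inverse correctors `v_j` -/

def phiVM (j : Fin (S.p + 1)) (k : ℕ) : X → X := fun x =>
  S.L (j - (↑(k + 1) : Fin (S.p + 1)))
    ((S.Cc (j - (↑(k + 1) : Fin (S.p + 1))) (k + 1)).symm x)

def phiVN (j : Fin (S.p + 1)) (k : ℕ) : X → X := fun x =>
  S.L (j + (↑k : Fin (S.p + 1))) (S.Cc j k x)

lemma phiVM_cont (j : Fin (S.p + 1)) (k : ℕ) : Continuous (S.phiVM j k) :=
  (S.hLip _).continuous.comp (S.Cc _ _).symm.continuous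

lemma phiVN_cont (j : Fin (S.p + 1)) (k : ℕ) : Continuous (S.phiVN j k) :=
  (S.hLip _).continuous.comp (S.Cc _ _).continuous

lemma phiVM_bdd (j : Fin (S.p + 1)) (k : ℕ) : ∀ x, ‖S.phiVM j k x‖ ≤ S.CL :=
  fun _ => S.hCL _ _

lemma phiVN_bdd (j : Fin (S.p + 1)) (k : ℕ) : ∀ x, ‖S.phiVN j k x‖ ≤ S.CL :=
  fun _ => S.hCL _ _

def termVM (j : Fin (S.p + 1)) (k : ℕ) : X →ᵇ X :=
  S.mkM k (S.phiVM j k) (S.phiVM_cont j k) (S.phiVM_bdd j k)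

def termVN (j : Fin (S.p + 1)) (k : ℕ) : X →ᵇ X :=
  S.mkN k (S.phiVN j k) (S.phiVN_cont j k) (S.phiVN_bdd j k)

lemma termVM_apply (j : Fin (S.p + 1)) (k : ℕ) (x : X) :
    S.termVM j k x = (⇑S.T)^[k] (S.PM (S.L (j - (↑(k + 1) : Fin (S.p + 1)))
      ((S.Cc (j - (↑(k + 1) : Fin (S.p + 1))) (k + 1)).symm x))) := rfl

lemma termVN_apply (j : Fin (S.p + 1)) (k : ℕ) (x : X) :
    S.termVN j k x = (⇑S.T.symm)^[k + 1]
      (S.PN (S.L (j + (↑k : Fin (S.p + 1))) (S.Cc j k x))) := rfl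

lemma norm_termVM_le (j : Fin (S.p + 1)) (k : ℕ) :
    ‖S.termVM j k‖ ≤ (S.a * S.b * S.CL) * S.t ^ k := by
  have h := S.norm_mkM_le k (S.phiVM j k) (S.phiVM_cont j k) (S.phiVM_bdd j k)
  calc ‖S.termVM j k‖ ≤ S.a * S.b * S.CL * S.t ^ k := h
    _ = (S.a * S.b * S.CL) * S.t ^ k := by ring

lemma norm_termVN_le (j : Fin (S.p + 1)) (k : ℕ) :
    ‖S.termVN j k‖ ≤ (S.a * S.b * S.CL * S.t) * S.t ^ k := by
  have h := S.norm_mkN_le k (S.phiVN j k) (S.phiVN_cont j k) (S.phiVN_bdd j k)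
  calc ‖S.termVN j k‖ ≤ S.a * S.b * S.CL * S.t * S.t ^ k := h
    _ = (S.a * S.b * S.CL * S.t) * S.t ^ k := by ring

lemma summable_termVM (j : Fin (S.p + 1)) : Summable (S.termVM j) :=
  S.summable_of_norm_le (S.norm_termVM_le j)

lemma summable_termVN (j : Fin (S.p + 1)) : Summable (S.termVN j) :=
  S.summable_of_norm_le (S.norm_termVN_le j)

/-- The inverse correctors `v_j`. -/
def vv (j : Fin (S.p + 1)) : X →ᵇ X :=
  (∑' k, S.termVN j k) - (∑' k, S.termVM j k)

lemma vv_apply (j : Fin (S.p + 1)) (x : X) :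
    S.vv j x = (∑' k, S.termVN j k x) - (∑' k, S.termVM j k x) := by
  have h : S.vv j x = (∑' k, S.termVN j k) x - (∑' k, S.termVM j k) x := rfl
  rw [h, tsum_apply_aux 𝕜 (S.summable_termVN j), tsum_apply_aux 𝕜 (S.summable_termVM j)]

lemma Cc_def_succ (i : Fin (S.p + 1)) (k : ℕ) :
    S.Cc i (k + 1) = (S.Cc i k).trans (S.Fh (i + (↑k : Fin (S.p + 1)))) := rfl

lemma Cc_symm_shift (j : Fin (S.p + 1)) (k : ℕ) (x : X) :
    (S.Cc (j - (↑k : Fin (S.p + 1))) (k + 1)).symm (S.Fh j x)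
      = (S.Cc (j - (↑k : Fin (S.p + 1))) k).symm x := by
  have e : (j - (↑k : Fin (S.p + 1))) + (↑k : Fin (S.p + 1)) = j := by ring
  calc (S.Cc (j - (↑k : Fin (S.p + 1))) (k + 1)).symm (S.Fh j x)
      = ((S.Cc (j - (↑k : Fin (S.p + 1))) k).trans
          (S.Fh ((j - (↑k : Fin (S.p + 1))) + (↑k : Fin (S.p + 1))))).symm (S.Fh j x) := rfl
    _ = (S.Cc (j - (↑k : Fin (S.p + 1))) k).symm
          ((S.Fh ((j - (↑k : Fin (S.p + 1))) + (↑k : Fin (S.p + 1)))).symm (S.Fh j x)) :=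
        Homeomorph.symm_trans_apply _ _ _
    _ = (S.Cc (j - (↑k : Fin (S.p + 1))) k).symm x := by
        rw [e, Homeomorph.symm_apply_apply]

theorem vv_conj (j : Fin (S.p + 1)) (x : X) :
    S.vv (j + 1) (S.Fh j x) = S.T (S.vv j x) - S.L j x := by
  have hVMk : ∀ k : ℕ, S.termVM (j + 1) k (S.Fh j x)
      = (⇑S.T)^[k] (S.PM (S.L (j - (↑k : Fin (S.p + 1)))
          ((S.Cc (j - (↑k : Fin (S.p + 1))) k).symm x))) := by
    intro k
    have e1 : (j + 1) - (↑(k + 1) : Fin (S.p + 1)) = j - (↑k : Fin (S.p + 1)) := by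
      push_cast; ring
    rw [S.termVM_apply, e1, S.Cc_symm_shift]
  have hsumVM1 : Summable (fun k => S.termVM (j + 1) k (S.Fh j x)) :=
    summable_apply_aux 𝕜 (S.summable_termVM (j + 1)) (S.Fh j x)
  have hsumVMx : Summable (fun k => S.termVM j k x) :=
    summable_apply_aux 𝕜 (S.summable_termVM j) x
  have hsumVNx : Summable (fun k => S.termVN j k x) :=
    summable_apply_aux 𝕜 (S.summable_termVN j) x
  have hVM : (∑' k, S.termVM (j + 1) k (S.Fh j x))
      = S.PM (S.L j x) + S.T (∑' k, S.termVM j k x) := by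
    rw [Summable.tsum_eq_zero_add hsumVM1]
    congr 1
    · rw [hVMk 0]
      simp [Cc]
    · have hsucc : ∀ k : ℕ, S.termVM (j + 1) (k + 1) (S.Fh j x)
          = S.T (S.termVM j k x) := by
        intro k
        rw [hVMk (k + 1), Function.iterate_succ_apply', ← S.termVM_apply]
      rw [tsum_congr hsucc]
      exact (S.map_tsum_T hsumVMx).symm
  have hTVN : S.T (∑' k, S.termVN j k x)
      = S.PN (S.L j x) + (∑' k, S.termVN (j + 1) k (S.Fh j x)) := by
    have hD : ∀ k : ℕ, S.T (S.termVN j k x)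
        = (⇑S.T.symm)^[k] (S.PN (S.L (j + (↑k : Fin (S.p + 1))) (S.Cc j k x))) := by
      intro k
      rw [S.termVN_apply, Function.iterate_succ_apply']
      exact S.T.apply_symm_apply _
    have hsumD : Summable (fun k => S.T (S.termVN j k x)) := S.summable_T hsumVNx
    rw [S.map_tsum_T hsumVNx, Summable.tsum_eq_zero_add hsumD]
    congr 1
    · rw [hD 0]
      simp [Cc]
    · apply tsum_congr
      intro k
      rw [hD (k + 1), S.termVN_apply]
      have e1 : (j + 1) + (↑k : Fin (S.p + 1)) = j + (↑(k + 1) : Fin (S.p + 1)) := by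
        push_cast; ring
      rw [e1, S.Cc_shift]
  have hVN : (∑' k, S.termVN (j + 1) k (S.Fh j x))
      = S.T (∑' k, S.termVN j k x) - S.PN (S.L j x) := by
    rw [hTVN]; abel
  calc S.vv (j + 1) (S.Fh j x)
      = (∑' k, S.termVN (j + 1) k (S.Fh j x)) - (∑' k, S.termVM (j + 1) k (S.Fh j x)) :=
        S.vv_apply _ _
    _ = (S.T (∑' k, S.termVN j k x) - S.PN (S.L j x))
        - (S.PM (S.L j x) + S.T (∑' k, S.termVM j k x)) := by rw [hVM, hVN]
    _ = S.T (∑' k, S.termVN j k x) - S.T (∑' k, S.termVM j k x)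
        - (S.PM (S.L j x) + S.PN (S.L j x)) := by abel
    _ = S.T (∑' k, S.termVN j k x) - S.T (∑' k, S.termVM j k x) - S.L j x := by rw [S.hP]
    _ = S.T ((∑' k, S.termVN j k x) - (∑' k, S.termVM j k x)) - S.L j x := by rw [map_sub]
    _ = S.T (S.vv j x) - S.L j x := by rw [← S.vv_apply]


/-! ### Iterated semiconjugacies and the inverse identities -/

lemma hu_iter (k : ℕ) (j : Fin (S.p + 1)) (x : X) :
    S.Cc j k (x + S.uu j x)
      = (⇑S.T)^[k] x + S.uu (j + (↑k : Fin (S.p + 1))) ((⇑S.T)^[k] x) := by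
  induction k with
  | zero =>
      have e : j + ((0 : ℕ) : Fin (S.p + 1)) = j := by push_cast; ring
      rw [Cc_zero, e]
      simp
  | succ k ih =>
      have e1 : j + (↑(k + 1) : Fin (S.p + 1)) = (j + (↑k : Fin (S.p + 1))) + 1 := by
        push_cast; ring
      have e2 : (⇑S.T)^[k + 1] x = S.T ((⇑S.T)^[k] x) := Function.iterate_succ_apply' _ _ _
      rw [Cc_succ, ih, S.Fh_apply, e1, e2,
        S.uu_conj (j + (↑k : Fin (S.p + 1))) ((⇑S.T)^[k] x), map_add]
      abel

lemma kv_iter (k : ℕ) (j : Fin (S.p + 1)) (x : X) :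
    (⇑S.T)^[k] (x + S.vv j x)
      = S.Cc j k x + S.vv (j + (↑k : Fin (S.p + 1))) (S.Cc j k x) := by
  induction k with
  | zero =>
      have e : j + ((0 : ℕ) : Fin (S.p + 1)) = j := by push_cast; ring
      rw [Cc_zero, e]
      simp
  | succ k ih =>
      have e1 : j + (↑(k + 1) : Fin (S.p + 1)) = (j + (↑k : Fin (S.p + 1))) + 1 := by
        push_cast; ring
      rw [Function.iterate_succ_apply', ih, map_add, Cc_succ, e1,
        S.vv_conj (j + (↑k : Fin (S.p + 1))) (S.Cc j k x), S.Fh_apply]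
      abel

lemma homeo_symm_apply_eq (h : X ≃ₜ X) {x y : X} : h.symm x = y ↔ x = h y :=
  Equiv.symm_apply_eq h.toEquiv

lemma left_inv (j : Fin (S.p + 1)) (x : X) :
    S.vv j (x + S.uu j x) = - S.uu j x := by
  have hN : ∀ k : ℕ, S.termVN j k (x + S.uu j x) = S.termN S.uu j k x := by
    intro k
    rw [S.termVN_apply, S.termN_apply, S.hu_iter k j x]
  have hM : ∀ k : ℕ, S.termVM j k (x + S.uu j x) = S.termM S.uu j k x := by
    intro k
    have key : (S.Cc (j - (↑(k + 1) : Fin (S.p + 1))) (k + 1)).symm (x + S.uu j x)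
        = (⇑S.T.symm)^[k + 1] x
          + S.uu (j - (↑(k + 1) : Fin (S.p + 1))) ((⇑S.T.symm)^[k + 1] x) := by
      rw [homeo_symm_apply_eq]
      rw [S.hu_iter (k + 1) (j - (↑(k + 1) : Fin (S.p + 1))) ((⇑S.T.symm)^[k + 1] x)]
      rw [S.iter_cancel (k + 1) x]
      have e : (j - (↑(k + 1) : Fin (S.p + 1))) + (↑(k + 1) : Fin (S.p + 1)) = j := by ring
      rw [e]
    rw [S.termVM_apply, S.termM_apply, key]
  rw [S.vv_apply, tsum_congr hN, tsum_congr hM, S.uu_apply]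
  abel


/-! ### The defect `ψ_j = v_j + u_j ∘ (id + v_j)` vanishes -/

/-- `ψ_j(x) = v_j(x) + u_j(x + v_j(x))`. -/
def psi : Fin (S.p + 1) → X →ᵇ X := fun j =>
  S.vv j + (S.uu j).compContinuous ⟨fun y => y + S.vv j y,
    continuous_id.add (S.vv j).continuous⟩

lemma psi_apply (j : Fin (S.p + 1)) (x : X) :
    S.psi j x = S.vv j x + S.uu j (x + S.vv j x) := rfl

lemma psi_pt_bound (j : Fin (S.p + 1)) (x : X) :
    ‖S.psi j x‖ ≤ S.K * S.c * ‖S.psi‖ := by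
  have hc0 : (0 : ℝ) ≤ S.c := S.c.2
  have hΨ0 : (0 : ℝ) ≤ ‖S.psi‖ := norm_nonneg _
  -- the two defect series
  have hpsiw : ∀ (i : Fin (S.p + 1)) (w : X), ‖S.psi i w‖ ≤ ‖S.psi‖ := fun i w =>
    le_trans (norm_coe_le_norm (S.psi i) w) (norm_le_pi_norm S.psi i)
  have hLdiff : ∀ (i : Fin (S.p + 1)) (w : X),
      ‖S.L i ((w + S.vv i w) + S.uu i (w + S.vv i w)) - S.L i w‖ ≤ (S.c : ℝ) * ‖S.psi‖ := by
    intro i w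
    have hq : ((w + S.vv i w) + S.uu i (w + S.vv i w)) - w = S.psi i w := by
      rw [S.psi_apply]; abel
    calc ‖S.L i ((w + S.vv i w) + S.uu i (w + S.vv i w)) - S.L i w‖
        = dist (S.L i ((w + S.vv i w) + S.uu i (w + S.vv i w))) (S.L i w) :=
          (dist_eq_norm _ _).symm
      _ ≤ (S.c : ℝ) * dist ((w + S.vv i w) + S.uu i (w + S.vv i w)) w :=
          (S.hLip i).dist_le_mul _ _
      _ = (S.c : ℝ) * ‖S.psi i w‖ := by rw [dist_eq_norm, hq]
      _ ≤ (S.c : ℝ) * ‖S.psi‖ := mul_le_mul_of_nonneg_left (hpsiw i w) hc0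
  -- M-terms
  have hMt : ∀ k : ℕ, ‖S.termM S.uu j k (x + S.vv j x) - S.termVM j k x‖
      ≤ (S.a * S.b * ((S.c : ℝ) * ‖S.psi‖)) * S.t ^ k := by
    intro k
    set i := j - (↑(k + 1) : Fin (S.p + 1)) with hi
    set w := (S.Cc i (k + 1)).symm x with hw
    have key2 : (⇑S.T.symm)^[k + 1] (x + S.vv j x) = w + S.vv i w := by
      have h1 : (⇑S.T)^[k + 1] (w + S.vv i w)
          = S.Cc i (k + 1) w + S.vv (i + (↑(k + 1) : Fin (S.p + 1))) (S.Cc i (k + 1) w) :=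
        S.kv_iter (k + 1) i w
      have h2 : S.Cc i (k + 1) w = x := Homeomorph.apply_symm_apply _ _
      have h3 : i + (↑(k + 1) : Fin (S.p + 1)) = j := by rw [hi]; ring
      rw [h2, h3] at h1
      rw [← h1, S.iter_cancel' (k + 1)]
    have eM : S.termM S.uu j k (x + S.vv j x) - S.termVM j k x
        = (⇑S.T)^[k] (S.PM (S.L i ((w + S.vv i w) + S.uu i (w + S.vv i w)) - S.L i w)) := by
      rw [S.termM_apply, S.termVM_apply, key2, S.iterT_sub, ← map_sub]
    rw [eM]
    have h1 := S.hMb k _ (S.hPM (S.L i ((w + S.vv i w) + S.uu i (w + S.vv i w)) - S.L i w))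
    have h2 : ‖S.PM (S.L i ((w + S.vv i w) + S.uu i (w + S.vv i w)) - S.L i w)‖
        ≤ S.b * ((S.c : ℝ) * ‖S.psi‖) :=
      le_trans (S.normPM _) (mul_le_mul_of_nonneg_left (hLdiff i w) S.hb0)
    have h3 : 0 ≤ S.a * S.t ^ k := mul_nonneg S.ha0.le (pow_nonneg S.ht0.le k)
    calc ‖(⇑S.T)^[k] (S.PM (S.L i ((w + S.vv i w) + S.uu i (w + S.vv i w)) - S.L i w))‖
        ≤ S.a * S.t ^ k * ‖S.PM (S.L i ((w + S.vv i w) + S.uu i (w + S.vv i w)) - S.L i w)‖ := h1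
      _ ≤ S.a * S.t ^ k * (S.b * ((S.c : ℝ) * ‖S.psi‖)) := mul_le_mul_of_nonneg_left h2 h3
      _ = (S.a * S.b * ((S.c : ℝ) * ‖S.psi‖)) * S.t ^ k := by ring
  -- N-terms
  have hNt : ∀ k : ℕ, ‖S.termN S.uu j k (x + S.vv j x) - S.termVN j k x‖
      ≤ (S.a * S.b * ((S.c : ℝ) * ‖S.psi‖) * S.t) * S.t ^ k := by
    intro k
    set i := j + (↑k : Fin (S.p + 1)) with hi
    set w := S.Cc j k x with hw
    have key2 : (⇑S.T)^[k] (x + S.vv j x) = w + S.vv i w := S.kv_iter k j x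
    have eN : S.termN S.uu j k (x + S.vv j x) - S.termVN j k x
        = (⇑S.T.symm)^[k + 1]
            (S.PN (S.L i ((w + S.vv i w) + S.uu i (w + S.vv i w)) - S.L i w)) := by
      rw [S.termN_apply, S.termVN_apply, key2, S.iterTs_sub, ← map_sub]
    rw [eN]
    have h1 := S.hNb (k + 1) _ (S.hPN (S.L i ((w + S.vv i w) + S.uu i (w + S.vv i w)) - S.L i w))
    have h2 : ‖S.PN (S.L i ((w + S.vv i w) + S.uu i (w + S.vv i w)) - S.L i w)‖
        ≤ S.b * ((S.c : ℝ) * ‖S.psi‖) :=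
      le_trans (S.normPN _) (mul_le_mul_of_nonneg_left (hLdiff i w) S.hb0)
    have h3 : 0 ≤ S.a * S.t ^ (k + 1) := mul_nonneg S.ha0.le (pow_nonneg S.ht0.le _)
    calc ‖(⇑S.T.symm)^[k + 1]
          (S.PN (S.L i ((w + S.vv i w) + S.uu i (w + S.vv i w)) - S.L i w))‖
        ≤ S.a * S.t ^ (k + 1)
            * ‖S.PN (S.L i ((w + S.vv i w) + S.uu i (w + S.vv i w)) - S.L i w)‖ := h1
      _ ≤ S.a * S.t ^ (k + 1) * (S.b * ((S.c : ℝ) * ‖S.psi‖)) := mul_le_mul_of_nonneg_left h2 h3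
      _ = (S.a * S.b * ((S.c : ℝ) * ‖S.psi‖) * S.t) * S.t ^ k := by ring
  -- identity for `psi j x`
  have hkey : S.psi j x
      = (∑' k, (S.termM S.uu j k (x + S.vv j x) - S.termVM j k x))
        - (∑' k, (S.termN S.uu j k (x + S.vv j x) - S.termVN j k x)) := by
    rw [Summable.tsum_sub (summable_apply_aux 𝕜 (S.summable_termM S.uu j) (x + S.vv j x))
        (summable_apply_aux 𝕜 (S.summable_termVM j) x),
      Summable.tsum_sub (summable_apply_aux 𝕜 (S.summable_termN S.uu j) (x + S.vv j x))
        (summable_apply_aux 𝕜 (S.summable_termVN j) x),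
      S.psi_apply, S.uu_apply j (x + S.vv j x), S.vv_apply j x]
    abel
  rw [hkey]
  have h1 := S.norm_tsum_le_gen hMt
  have h2 := S.norm_tsum_le_gen hNt
  have hKeq : S.K = S.a * S.b * (1 + S.t) * (1 - S.t)⁻¹ := by rw [K, div_eq_mul_inv]
  calc ‖(∑' k, (S.termM S.uu j k (x + S.vv j x) - S.termVM j k x))
        - (∑' k, (S.termN S.uu j k (x + S.vv j x) - S.termVN j k x))‖
      ≤ ‖∑' k, (S.termM S.uu j k (x + S.vv j x) - S.termVM j k x)‖
        + ‖∑' k, (S.termN S.uu j k (x + S.vv j x) - S.termVN j k x)‖ := norm_sub_le _ _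
    _ ≤ (S.a * S.b * ((S.c : ℝ) * ‖S.psi‖)) * (1 - S.t)⁻¹
        + (S.a * S.b * ((S.c : ℝ) * ‖S.psi‖) * S.t) * (1 - S.t)⁻¹ := add_le_add h1 h2
    _ = S.K * S.c * ‖S.psi‖ := by rw [hKeq]; ring

lemma psi_zero (j : Fin (S.p + 1)) : S.psi j = 0 := by
  have hnorm : ‖S.psi‖ ≤ S.K * S.c * ‖S.psi‖ := by
    have h0 : (0 : ℝ) ≤ S.K * S.c * ‖S.psi‖ :=
      mul_nonneg (mul_nonneg S.hK0 S.c.2) (norm_nonneg _)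
    rw [pi_norm_le_iff_of_nonneg h0]
    intro i
    rw [norm_le h0]
    exact fun x => S.psi_pt_bound i x
  have hsm : S.K * (S.c : ℝ) < 1 := S.hsmall
  have hΨ0 : (0 : ℝ) ≤ ‖S.psi‖ := norm_nonneg _
  have hz : ‖S.psi‖ = 0 := by nlinarith
  have : ‖S.psi j‖ = 0 := le_antisymm (le_trans (norm_le_pi_norm S.psi j) hz.le)
    (norm_nonneg _)
  exact norm_eq_zero.mp this

lemma right_inv (j : Fin (S.p + 1)) (x : X) :
    S.uu j (x + S.vv j x) = - S.vv j x := by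
  have h0 : S.vv j x + S.uu j (x + S.vv j x) = 0 := by
    have := congrArg (fun f => f x) (S.psi_zero j)
    simpa [S.psi_apply] using this
  rw [add_comm] at h0
  exact add_eq_zero_iff_eq_neg.mp h0

/-- The homeomorphism `h_j = id + u_j`. -/
def hmeo (j : Fin (S.p + 1)) : X ≃ₜ X where
  toFun x := x + S.uu j x
  invFun x := x + S.vv j x
  left_inv x := by
    have h := S.left_inv j x
    calc (x + S.uu j x) + S.vv j (x + S.uu j x) = (x + S.uu j x) + (- S.uu j x) := by rw [h]
      _ = x := by abel
  right_inv x := by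
    have h := S.right_inv j x
    calc (x + S.vv j x) + S.uu j (x + S.vv j x) = (x + S.vv j x) + (- S.vv j x) := by rw [h]
      _ = x := by abel
  continuous_toFun := continuous_id.add (S.uu j).continuous
  continuous_invFun := continuous_id.add (S.vv j).continuous

lemma main_conj (j : Fin (S.p + 1)) (x : X) :
    S.T (x + S.uu j x) + S.L j (x + S.uu j x) = S.T x + S.uu (j + 1) (S.T x) := by
  rw [S.uu_conj j x, map_add]
  abel

end Pack

end HGaux


/-- Existence of the semiconjugacies `h_j = I + u_j` with `(T + L_j) ∘ h_j = h_{j+1} ∘ T`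
(indices mod `p`), each `h_j` a homeomorphism, with the bound
`max_j sup_x ‖u_j x‖ ≤ (a·b·(1+t)/(1-t)) · max_j ‖L_j‖_∞`. -/
theorem semiconjugacy_existence_H
    {𝕜 X : Type*} [RCLike 𝕜] [NormedAddCommGroup X] [NormedSpace 𝕜 X] [CompleteSpace X]
    (T : X ≃L[𝕜] X) (M N : Submodule 𝕜 X)
    (hMc : IsClosed (M : Set X)) (hNc : IsClosed (N : Set X)) (hcompl : IsCompl M N)
    (hM : ∀ x ∈ M, T x ∈ M) (hN : ∀ x ∈ N, T.symm x ∈ N)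
    (a t : ℝ) (ha : 1 ≤ a) (ht : t ∈ Set.Ioo (0 : ℝ) 1)
    (hMbound : ∀ (n : ℕ), ∀ y ∈ M, ‖(⇑T)^[n] y‖ ≤ a * t ^ n * ‖y‖)
    (hNbound : ∀ (n : ℕ), ∀ z ∈ N, ‖(⇑T.symm)^[n] z‖ ≤ a * t ^ n * ‖z‖)
    (PM PN : X →L[𝕜] X)
    (hPM : ∀ x, PM x ∈ M) (hPN : ∀ x, PN x ∈ N) (hP : ∀ x, PM x + PN x = x) :
    ∃ ε > 0, ∀ (p : ℕ) (L : Fin (p + 1) → X → X),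
      (∀ j, BoundedMap (L j)) → (∀ j, LipLt (L j) ε) →
      ∃ u : Fin (p + 1) → X → X,
        (∀ j, Continuous (u j)) ∧ (∀ j, BoundedMap (u j)) ∧
        (∀ j, ∃ h : X ≃ₜ X, ∀ x : X, h x = x + u j x) ∧
        (∀ j, ∀ x : X, T (x + u j x) + L j (x + u j x) = T x + u (j + 1) (T x)) ∧
        (∀ j, ∀ x : X, ‖u j x‖ ≤
          a * max ‖PM‖ ‖PN‖ * (1 + t) / (1 - t) * ⨆ i, ⨆ y, ‖L i y‖) := by
  obtain ⟨ht0, ht1⟩ := ht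
  have hb0 : (0 : ℝ) ≤ max ‖PM‖ ‖PN‖ := le_trans (norm_nonneg _) (le_max_left _ _)
  have ha0 : (0 : ℝ) < a := lt_of_lt_of_le one_pos ha
  have h1t : (0 : ℝ) < 1 - t := by linarith
  have h1t' : (0 : ℝ) < 1 + t := by linarith
  have hbp : (0 : ℝ) < max ‖PM‖ ‖PN‖ + 1 := by linarith
  set ε1 : ℝ := (1 - t) / (a * (max ‖PM‖ ‖PN‖ + 1) * (1 + t)) with hε1
  set ε2 : ℝ := (‖(T.symm : X →L[𝕜] X)‖ + 1)⁻¹ with hε2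
  have hε1p : 0 < ε1 := div_pos h1t (by positivity)
  have hε2p : 0 < ε2 := by
    rw [hε2]
    have h : (0 : ℝ) < ‖(T.symm : X →L[𝕜] X)‖ + 1 := by
      have := norm_nonneg (T.symm : X →L[𝕜] X); linarith
    positivity
  refine ⟨min ε1 ε2, lt_min hε1p hε2p, ?_⟩
  intro p L hBdd hLip
  have hLip' : ∀ j, ∃ c : NNReal, (c : ℝ) < min ε1 ε2 ∧ LipschitzWith c (L j) := hLip
  choose cj hcj1 hcj2 using hLip'
  set c : NNReal := Finset.univ.sup cj with hcdef
  have hcL : ∀ j, LipschitzWith c (L j) := fun j =>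
    (hcj2 j).weaken (Finset.le_sup (Finset.mem_univ j))
  have hcε : (c : ℝ) < min ε1 ε2 := by
    have hmin : (0 : ℝ) < min ε1 ε2 := lt_min hε1p hε2p
    have hlt : c < (min ε1 ε2).toNNReal := by
      rw [hcdef]
      rw [Finset.sup_lt_iff (by simpa using Real.toNNReal_pos.mpr hmin)]
      intro j _
      rw [Real.lt_toNNReal_iff_coe_lt]
      exact hcj1 j
    calc (c : ℝ) < ((min ε1 ε2).toNNReal : ℝ) := NNReal.coe_lt_coe.mpr hlt
      _ = min ε1 ε2 := Real.coe_toNNReal _ hmin.le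
  have hcε1 : (c : ℝ) < ε1 := lt_of_lt_of_le hcε (min_le_left _ _)
  have hcε2 : (c : ℝ) < ε2 := lt_of_lt_of_le hcε (min_le_right _ _)
  set CL : ℝ := ⨆ i, ⨆ y, ‖L i y‖ with hCLdef
  have hCL : ∀ j y, ‖L j y‖ ≤ CL := by
    intro j y
    have hbdd : ∀ i : Fin (p + 1), BddAbove (Set.range fun z => ‖L i z‖) := by
      intro i; obtain ⟨C, hC⟩ := hBdd i
      exact ⟨C, fun r ⟨y0, hy0⟩ => hy0 ▸ hC y0⟩
    have h1 : ‖L j y‖ ≤ ⨆ z, ‖L j z‖ := le_ciSup (hbdd j) y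
    have h2 : (⨆ z, ‖L j z‖) ≤ CL :=
      le_ciSup (f := fun i => ⨆ z, ‖L i z‖) (Set.Finite.bddAbove (Set.finite_range _)) j
    exact le_trans h1 h2
  have hK0 : (0 : ℝ) ≤ a * max ‖PM‖ ‖PN‖ * (1 + t) / (1 - t) :=
    div_nonneg (mul_nonneg (mul_nonneg ha0.le hb0) h1t'.le) h1t.le
  have hsmall : a * max ‖PM‖ ‖PN‖ * (1 + t) / (1 - t) * (c : ℝ) < 1 := by
    have h1 : a * max ‖PM‖ ‖PN‖ * (1 + t) / (1 - t) * (c : ℝ)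
        ≤ a * max ‖PM‖ ‖PN‖ * (1 + t) / (1 - t) * ε1 :=
      mul_le_mul_of_nonneg_left hcε1.le hK0
    have h2 : a * max ‖PM‖ ‖PN‖ * (1 + t) / (1 - t) * ε1
        = max ‖PM‖ ‖PN‖ / (max ‖PM‖ ‖PN‖ + 1) := by
      rw [hε1]
      field_simp
    have h3 : max ‖PM‖ ‖PN‖ / (max ‖PM‖ ‖PN‖ + 1) < 1 := by
      rw [div_lt_one hbp]; linarith
    linarith
  have hFh : Subsingleton X ∨ c < (‖(T.symm : X →L[𝕜] X)‖₊)⁻¹ := by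
    by_cases hTs : ‖(T.symm : X →L[𝕜] X)‖ = 0
    · left
      constructor
      intro x y
      have hz : ∀ z : X, z = 0 := by
        intro z
        have h1 : (T.symm : X →L[𝕜] X) = 0 := norm_eq_zero.mp hTs
        have h2 : T.symm z = 0 := by
          have h3 : T.symm z = (T.symm : X →L[𝕜] X) z := rfl
          rw [h3, h1, ContinuousLinearMap.zero_apply]
        calc z = T (T.symm z) := (T.apply_symm_apply z).symm
          _ = T 0 := by rw [h2]
          _ = 0 := map_zero _
      rw [hz x, hz y]
    · right
      have hpos : 0 < ‖(T.symm : X →L[𝕜] X)‖ := lt_of_le_of_ne (norm_nonneg _) (Ne.symm hTs)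
      rw [← NNReal.coe_lt_coe]
      have hcoe : ((‖(T.symm : X →L[𝕜] X)‖₊⁻¹ : NNReal) : ℝ)
          = ‖(T.symm : X →L[𝕜] X)‖⁻¹ := by
        rw [NNReal.coe_inv, coe_nnnorm]
      rw [hcoe]
      have hlt : ε2 < ‖(T.symm : X →L[𝕜] X)‖⁻¹ := by
        rw [hε2]
        exact inv_strictAnti₀ hpos (lt_add_one _)
      linarith
  let S : HGaux.Pack 𝕜 X :=
    { T := T, M := M, N := N, hMinv := hM, a := a, t := t, ha := ha, ht0 := ht0, ht1 := ht1,
      hMb := hMbound, hNb := hNbound, hNinv := hN, PM := PM, PN := PN, hPM := hPM,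
      hPN := hPN, hP := hP, p := p, L := L, c := c, hLip := hcL, CL := CL, hCL := hCL,
      hFh := hFh, hsmall := hsmall }
  refine ⟨fun j => ⇑(S.uu j), fun j => (S.uu j).continuous,
    fun j => ⟨‖S.uu j‖, fun x => (S.uu j).norm_coe_le_norm x⟩,
    fun j => ⟨S.hmeo j, fun x => rfl⟩, fun j x => S.main_conj j x, fun j x => ?_⟩
  exact le_trans ((S.uu j).norm_coe_le_norm x) (S.uu_norm j)

end
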